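/- Let λ be an ordinal of cofinality ω, with an increasing sequence (α_i)_{i∈ω} converging to λ, and let G^λ_0 be the inverse system with G_α = ⊕_{ξ∈[α,λ)} ℤ_2 and inclusion bonding maps. The coherent sequence x_{α,β} = {α_i : α ≤ α_i < β} is nontrivial: there is no family (y_α)_{α<λ} with y_α ∈ G_α such that x_{α,β} = y_α + p^β_α(y_β) for all α ≤ β. Consequently lim^1 G^λ_0 ≠ 0. -/

import Mathlib

/-!
Statement 4: Let λ be an ordinal of cofinality ω, with a strictly increasing sequence
(α_i)_{i∈ω} converging to λ, and let `G^λ_0` be the inverse system whose group at `α`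
is the Boolean group of finite subsets of `[α, λ)` (symmetric difference as addition),
with inclusion bonding maps.  The coherent sequence `x_{α,β} = {α_i : α ≤ α_i < β}` is
nontrivial: there is no family `(y_α)_{α<λ}` with `y_α ∈ G_α` (i.e. `y_α` a finite
subset of `[α, λ)`) such that `x_{α,β} = y_α + p^β_α(y_β)` (symmetric difference) for
all `α ≤ β < λ`.  Consequently `lim^1 G^λ_0 ≠ 0`.
-/
theorem mitchell_base_nontrivial (l : Ordinal) (hl : l.cof = Cardinal.aleph0)
    (a : ℕ → Ordinal) (ha : StrictMono a) (halt : ∀ i, a i < l)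
    (hconv : ∀ β, β < l → ∃ i, β < a i)
    (x : Ordinal → Ordinal → Set Ordinal)
    (hx : ∀ α β, x α β = {ξ | (∃ i, ξ = a i) ∧ α ≤ ξ ∧ ξ < β}) :
    ¬ ∃ y : Ordinal → Set Ordinal,
        (∀ α, α < l → (y α).Finite ∧ y α ⊆ Set.Ico α l) ∧
        (∀ α β : Ordinal, α ≤ β → β < l → x α β = symmDiff (y α) (y β)) := by
  rintro ⟨y, hy1, hy2⟩
  have hl0 : (0:Ordinal) < l := lt_of_le_of_lt (zero_le : (0:Ordinal) ≤ a 0) (halt 0)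
  -- every a i belongs to y 0
  have key : ∀ i, a i ∈ y 0 := by
    intro i
    obtain ⟨j, hj⟩ := hconv (a i) (halt i)
    have hmem : a i ∈ x 0 (a j) := by
      rw [hx]; exact ⟨⟨i, rfl⟩, zero_le, hj⟩
    rw [hy2 0 (a j) zero_le (halt j)] at hmem
    have hnot : a i ∉ y (a j) := fun h => absurd ((hy1 (a j) (halt j)).2 h).1 (not_le.mpr hj)
    rcases hmem with ⟨h, _⟩ | ⟨h, _⟩
    · exact h
    · exact absurd h hnot
  have hinf : (y 0).Infinite :=
    Set.infinite_of_injective_forall_mem ha.injective key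
  exact hinf (hy1 0 hl0).1
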